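/- Fix λ > 0. For ε ∈ (0,1) define b_V^ε : ℝ → ℝ by b_V^ε(x) = −1/ε for 0 ≤ x ≤ ε, b_V^ε(x) = 1/ε for −ε ≤ x < 0, and b_V^ε(x) = 0 otherwise. Then there exist constants C > 0 and ε₀ ∈ (0,1) such that for every ε ∈ (0, ε₀) the following holds: every bounded function f : ℝ → ℝ that is continuously differentiable on ℝ, twice differentiable at every point x ∉ {−√ε, −ε, 0, ε, √ε}, and satisfies λ f(x) − (1/2) f''(x) − b_V^ε(x) f'(x) = 1_{(−√ε, √ε)}(x) at every such x, satisfies sup_{x ∈ ℝ} |f(x)| ≤ C √ε. -/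

import Mathlib

open Real Set Filter

lemma abs_le_cosh (t : ℝ) : |t| ≤ Real.cosh t := by
  have h1 : |t| ≤ Real.sinh |t| := Real.self_le_sinh_iff.mpr (abs_nonneg t)
  have h2 : Real.sinh |t| < Real.cosh |t| := Real.sinh_lt_cosh _
  rw [Real.cosh_abs] at h2
  linarith

lemma abs_sinh_le_cosh (t : ℝ) : |Real.sinh t| ≤ Real.cosh t := by
  rw [Real.abs_sinh]
  have := Real.sinh_lt_cosh |t|
  rw [Real.cosh_abs] at this
  linarith

lemma deriv2_nonpos_at_max (u : ℝ → ℝ) (x₀ : ℝ)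
    (hu : Differentiable ℝ u) (hu2 : DifferentiableAt ℝ (deriv u) x₀)
    (hmax : ∀ x, u x ≤ u x₀) : deriv (deriv u) x₀ ≤ 0 := by
  by_contra hpos
  push_neg at hpos
  have hloc : IsLocalMax u x₀ := Filter.Eventually.of_forall hmax
  have h0 : deriv u x₀ = 0 := hloc.deriv_eq_zero
  have hd : HasDerivAt (deriv u) (deriv (deriv u) x₀) x₀ := hu2.hasDerivAt
  have hT := hasDerivAt_iff_tendsto_slope.mp hd
  have hev : ∀ᶠ x in nhdsWithin x₀ {x₀}ᶜ, 0 < slope (deriv u) x₀ x :=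
    hT.eventually (eventually_gt_nhds hpos)
  have hev2 : ∀ᶠ x in nhdsWithin x₀ (Set.Ioi x₀), 0 < slope (deriv u) x₀ x :=
    hev.filter_mono (nhdsWithin_mono _ (fun y hy => ne_of_gt hy))
  obtain ⟨c, hc, hsub⟩ := mem_nhdsGT_iff_exists_Ioo_subset.mp hev2
  have hposder : ∀ y ∈ Set.Ioo x₀ c, 0 < deriv u y := by
    intro y hy
    have hs := hsub hy
    simp only [Set.mem_setOf_eq, slope_def_field] at hs
    have h5 : 0 < (deriv u y - deriv u x₀) / (y - x₀) := hs
    rw [h0, sub_zero] at h5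
    rcases div_pos_iff.mp h5 with ⟨h6, _⟩ | ⟨_, h7⟩
    · exact h6
    · exfalso; linarith [hy.1]
  have hmono : StrictMonoOn u (Set.Icc x₀ c) := by
    apply strictMonoOn_of_deriv_pos (convex_Icc _ _) hu.continuous.continuousOn
    intro y hy
    rw [interior_Icc] at hy
    exact hposder y hy
  have hlt : u x₀ < u c :=
    hmono (Set.left_mem_Icc.mpr (le_of_lt hc)) (Set.right_mem_Icc.mpr (le_of_lt hc)) hc
  linarith [hmax c]

lemma max_principle (lam B : ℝ) (hlam : 0 < lam) (hB : 0 ≤ B)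
    (S : Finset ℝ) (hScard : S.card ≤ 5) (b h : ℝ → ℝ)
    (hb : ∀ x, |b x| ≤ B)
    (hd : Differentiable ℝ h)
    (hd2 : ∀ x ∉ (S : Set ℝ), DifferentiableAt ℝ (deriv h) x)
    (M : ℝ) (hM : ∀ x, h x ≤ M)
    (hineq : ∀ x ∉ (S : Set ℝ), lam * h x ≤ (1/2) * deriv (deriv h) x + b x * deriv h x) :
    ∀ y, h y ≤ 0 := by
  set ν : ℝ := lam / (lam + B + 1) with hνdef
  have hDpos : (0:ℝ) < lam + B + 1 := by linarith
  have hνpos : 0 < ν := div_pos hlam hDpos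
  have hν1 : ν ≤ 1 := by
    rw [hνdef, div_le_one hDpos]; linarith
  have hνmul : ν * (lam + B + 1) = lam := div_mul_cancel₀ _ (ne_of_gt hDpos)
  have hνlam : ν * ν / 2 + B * ν ≤ lam := by nlinarith
  -- the cosh-comparison derivative facts
  have inner_der : ∀ (a x : ℝ), HasDerivAt (fun x => ν * (x - a)) ν x := by
    intro a x
    have := ((hasDerivAt_id x).sub_const a).const_mul ν
    simpa using this
  have cosh_der : ∀ (δ a x : ℝ), HasDerivAt (fun x => δ * Real.cosh (ν * (x - a)))
      (δ * ν * Real.sinh (ν * (x - a))) x := by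
    intro δ a x
    have := ((inner_der a x).cosh).const_mul δ
    refine this.congr_deriv ?_; ring
  have sinh_der : ∀ (δ a x : ℝ), HasDerivAt (fun x => δ * ν * Real.sinh (ν * (x - a)))
      (δ * ν * ν * Real.cosh (ν * (x - a))) x := by
    intro δ a x
    have := ((inner_der a x).sinh).const_mul (δ * ν)
    refine this.congr_deriv ?_; ring
  have key : ∀ δ : ℝ, 0 < δ → ∃ a : ℝ, 0 ≤ a ∧ a ≤ 5 ∧
      ∀ x, h x ≤ δ * Real.cosh (ν * (x - a)) := by
    intro δ hδ
    -- existence of global max points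
    have exm : ∀ a : ℝ, ∃ x₀ : ℝ, ∀ x, h x - δ * Real.cosh (ν * (x - a)) ≤
        h x₀ - δ * Real.cosh (ν * (x₀ - a)) := by
      intro a
      set u : ℝ → ℝ := fun x => h x - δ * Real.cosh (ν * (x - a)) with hu
      have hucont : Continuous u := by
        apply hd.continuous.sub
        exact continuous_const.mul (Real.continuous_cosh.comp
          ((continuous_const.mul (continuous_id.sub continuous_const))))
      set R : ℝ := 2 * (M - h a + δ) / (δ * ν) with hR
      have hMa : h a ≤ M := hM a
      have hRpos : 0 < R := by
        apply div_pos (by linarith) (by positivity)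
      obtain ⟨x₀, hx₀mem, hx₀⟩ := (isCompact_Icc (a := a - R) (b := a + R)).exists_isMaxOn
        ⟨a, by constructor <;> linarith⟩ hucont.continuousOn
      refine ⟨x₀, fun x => ?_⟩
      by_cases hx : x ∈ Set.Icc (a - R) (a + R)
      · exact hx₀ hx
      · have hua : u a = h a - δ := by
          simp [hu]
        have hfar : R ≤ |x - a| := by
          simp only [Set.mem_Icc, not_and_or, not_le] at hx
          rcases hx with hx | hx
          · rw [abs_of_nonpos (by linarith)]; linarith
          · rw [abs_of_nonneg (by linarith)]; linarith
        have hcosh : ν * R ≤ Real.cosh (ν * (x - a)) := by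
          calc ν * R ≤ ν * |x - a| := by
                apply mul_le_mul_of_nonneg_left hfar (le_of_lt hνpos)
            _ = |ν * (x - a)| := by
                rw [abs_mul, abs_of_pos hνpos]
            _ ≤ Real.cosh (ν * (x - a)) := abs_le_cosh _
        have hνR : ν * R = 2 * (M - h a + δ) / δ := by
          rw [hR]; field_simp
        have hbig : M - h a + δ ≤ δ * Real.cosh (ν * (x - a)) := by
          have h1 : δ * (ν * R) ≤ δ * Real.cosh (ν * (x - a)) :=
            mul_le_mul_of_nonneg_left hcosh (le_of_lt hδ)
          rw [hνR] at h1
          have h2 : δ * (2 * (M - h a + δ) / δ) = 2 * (M - h a + δ) := by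
            field_simp
          rw [h2] at h1
          linarith
        have hua1 : Real.cosh (ν * (a - a)) = 1 := by
          rw [show ν * (a - a) = 0 by ring, Real.cosh_zero]
        have : u x ≤ u a := by
          simp only [hu, hua1]
          have := hM x
          linarith
        exact le_trans this (hx₀ ⟨by linarith, by linarith⟩)
    choose xm hxm using exm
    -- derivative identity at each max point
    have derfact : ∀ a : ℝ, deriv h (xm a) = δ * ν * Real.sinh (ν * (xm a - a)) := by
      intro a
      have hloc : IsLocalMax (fun x => h x - δ * Real.cosh (ν * (x - a))) (xm a) :=
        Filter.Eventually.of_forall (hxm a)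
      have hder : HasDerivAt (fun x => h x - δ * Real.cosh (ν * (x - a)))
          (deriv h (xm a) - δ * ν * Real.sinh (ν * (xm a - a))) (xm a) :=
        ((hd (xm a)).hasDerivAt).sub (cosh_der δ a (xm a))
      have := hloc.hasDerivAt_eq_zero hder
      linarith
    by_cases hall : ∀ n ∈ Finset.range 6, xm (n : ℝ) ∈ S
    · exfalso
      obtain ⟨i, hi, j, hj, hij, hxij⟩ :=
        Finset.exists_ne_map_eq_of_card_lt_of_maps_to
          (s := Finset.range 6) (t := S)
          (by rw [Finset.card_range]; omega) hall
      have e1 := derfact (i : ℝ)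
      have e2 := derfact (j : ℝ)
      rw [hxij] at e1
      have h4 := e1.symm.trans e2
      have hδν : δ * ν ≠ 0 := by positivity
      have hν0 : ν ≠ 0 := ne_of_gt hνpos
      have e3 : Real.sinh (ν * (xm (j:ℝ) - (i:ℝ))) = Real.sinh (ν * (xm (j:ℝ) - (j:ℝ))) :=
        mul_left_cancel₀ hδν h4
      have e4 := Real.sinh_injective e3
      have e5 : ((i:ℝ) : ℝ) = (j:ℝ) := by
        have := mul_left_cancel₀ hν0 e4
        linarith
      exact hij (by exact_mod_cast e5)
    · push_neg at hall
      obtain ⟨n, hn6, hnS⟩ := hall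
      set a : ℝ := (n : ℝ) with ha
      set x₀ : ℝ := xm a with hx₀
      have hd0 : deriv h x₀ = δ * ν * Real.sinh (ν * (x₀ - a)) := derfact a
      -- second derivative bound
      set u : ℝ → ℝ := fun x => h x - δ * Real.cosh (ν * (x - a)) with hu
      have hudiff : Differentiable ℝ u :=
        hd.sub (fun x => (cosh_der δ a x).differentiableAt)
      have hder_u : deriv u = fun x => deriv h x - δ * ν * Real.sinh (ν * (x - a)) :=
        funext fun x => (((hd x).hasDerivAt).sub (cosh_der δ a x)).deriv
      have hud2 : DifferentiableAt ℝ (deriv u) x₀ := by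
        rw [hder_u]
        exact (hd2 x₀ hnS).sub (sinh_der δ a x₀).differentiableAt
      have h2nd : deriv (deriv u) x₀ ≤ 0 :=
        deriv2_nonpos_at_max u x₀ hudiff hud2 (hxm a)
      have h2eq : deriv (deriv u) x₀ =
          deriv (deriv h) x₀ - δ * ν * ν * Real.cosh (ν * (x₀ - a)) := by
        rw [hder_u]
        exact (((hd2 x₀ hnS).hasDerivAt).sub (sinh_der δ a x₀)).deriv
      have hd2h : deriv (deriv h) x₀ ≤ δ * ν * ν * Real.cosh (ν * (x₀ - a)) := by
        rw [h2eq] at h2nd; linarith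
      -- combine with the differential inequality
      have hin := hineq x₀ hnS
      have hbx := hb x₀
      have hchpos : 0 < Real.cosh (ν * (x₀ - a)) :=
        lt_of_lt_of_le one_pos (Real.one_le_cosh _)
      have hdrift : b x₀ * deriv h x₀ ≤ B * (δ * ν * Real.cosh (ν * (x₀ - a))) := by
        rw [hd0]
        calc b x₀ * (δ * ν * Real.sinh (ν * (x₀ - a)))
            ≤ |b x₀ * (δ * ν * Real.sinh (ν * (x₀ - a)))| := le_abs_self _
          _ = |b x₀| * (δ * ν * |Real.sinh (ν * (x₀ - a))|) := by
              rw [abs_mul, abs_mul, abs_mul, abs_of_pos hδ, abs_of_pos hνpos]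
          _ ≤ B * (δ * ν * Real.cosh (ν * (x₀ - a))) := by
              apply mul_le_mul hbx _ (by positivity) hB
              apply mul_le_mul_of_nonneg_left (abs_sinh_le_cosh _) (by positivity)
      have hlamh : lam * h x₀ ≤ δ * lam * Real.cosh (ν * (x₀ - a)) := by
        have h7 : lam * h x₀ ≤ (1/2) * (δ * ν * ν * Real.cosh (ν * (x₀ - a)))
            + B * (δ * ν * Real.cosh (ν * (x₀ - a))) := by
          calc lam * h x₀ ≤ (1/2) * deriv (deriv h) x₀ + b x₀ * deriv h x₀ := hin
            _ ≤ _ := by linarith [hd2h, hdrift]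
        have h8 : (1/2) * (δ * ν * ν * Real.cosh (ν * (x₀ - a)))
            + B * (δ * ν * Real.cosh (ν * (x₀ - a)))
            = δ * Real.cosh (ν * (x₀ - a)) * (ν * ν / 2 + B * ν) := by ring
        have h9 : δ * Real.cosh (ν * (x₀ - a)) * (ν * ν / 2 + B * ν)
            ≤ δ * Real.cosh (ν * (x₀ - a)) * lam :=
          mul_le_mul_of_nonneg_left hνlam (by positivity)
        calc lam * h x₀ ≤ _ := h7
          _ = _ := h8
          _ ≤ δ * Real.cosh (ν * (x₀ - a)) * lam := h9
          _ = δ * lam * Real.cosh (ν * (x₀ - a)) := by ring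
      have hx₀le : h x₀ ≤ δ * Real.cosh (ν * (x₀ - a)) :=
        (mul_le_mul_iff_right₀ hlam).mp (by linarith [hlamh])
      refine ⟨a, by positivity, ?_, fun x => ?_⟩
      · rw [ha]
        have : n ≤ 5 := by
          have := Finset.mem_range.mp hn6; omega
        exact_mod_cast this
      · have h8 := hxm a x
        linarith [h8, hx₀le]
  -- conclude
  intro y
  have hcb : (0:ℝ) < Real.cosh (ν * (|y| + 5)) :=
    lt_of_lt_of_le one_pos (Real.one_le_cosh _)
  have hbound : ∀ δ : ℝ, 0 < δ → h y ≤ δ * Real.cosh (ν * (|y| + 5)) := by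
    intro δ hδ
    obtain ⟨a, ha0, ha5, hka⟩ := key δ hδ
    calc h y ≤ δ * Real.cosh (ν * (y - a)) := hka y
      _ ≤ δ * Real.cosh (ν * (|y| + 5)) := by
          apply mul_le_mul_of_nonneg_left _ (le_of_lt hδ)
          apply Real.cosh_le_cosh.mpr
          rw [abs_mul, abs_mul, abs_of_pos hνpos]
          apply mul_le_mul_of_nonneg_left _ (le_of_lt hνpos)
          rw [abs_of_nonneg (by positivity : (0:ℝ) ≤ |y| + 5)]
          calc |y - a| ≤ |y| + |a| := abs_sub _ _
            _ ≤ |y| + 5 := by rw [abs_of_nonneg ha0]; linarith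
  apply le_of_forall_pos_le_add
  intro ε hε
  have := hbound (ε / Real.cosh (ν * (|y| + 5))) (by positivity)
  rw [div_mul_cancel₀ _ (ne_of_gt hcb)] at this
  linarith


noncomputable section

/-- √ε -/
def s7s (ε : ℝ) : ℝ := Real.sqrt ε
/-- √(2λ) -/
def s7mu (lam : ℝ) : ℝ := Real.sqrt (2 * lam)
/-- e² - 1 -/
def s7k : ℝ := Real.exp 2 - 1
/-- A -/
def s7A (lam ε : ℝ) : ℝ := (s7k * ε + 2 * (s7s ε - ε)) / s7mu lam
/-- g(ε) -/
def s7ge (lam ε : ℝ) : ℝ := s7A lam ε + s7k * ε * (s7s ε - ε) + (s7s ε - ε)^2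
/-- g(0) -/
def s7a (lam ε : ℝ) : ℝ := s7ge lam ε - ε^2 + ε^2/2 * (Real.exp 2 - 1)

def s7g (lam ε x : ℝ) : ℝ :=
  if x < -s7s ε then s7A lam ε * Real.exp (s7mu lam * (x + s7s ε))
  else if x < -ε then s7ge lam ε - s7k * ε * (-x - ε) - (-x - ε)^2
  else if x < 0 then s7a lam ε - ε * x - ε^2/2 * (Real.exp (-2*x/ε) - 1)
  else if x ≤ ε then s7a lam ε + ε * x - ε^2/2 * (Real.exp (2*x/ε) - 1)
  else if x ≤ s7s ε then s7ge lam ε - s7k * ε * (x - ε) - (x - ε)^2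
  else s7A lam ε * Real.exp (s7mu lam * (s7s ε - x))

def s7g1 (lam ε x : ℝ) : ℝ :=
  if x < -s7s ε then s7mu lam * s7A lam ε * Real.exp (s7mu lam * (x + s7s ε))
  else if x < -ε then s7k * ε + 2 * (-x - ε)
  else if x < 0 then -ε + ε * Real.exp (-2*x/ε)
  else if x ≤ ε then ε - ε * Real.exp (2*x/ε)
  else if x ≤ s7s ε then -(s7k * ε) - 2 * (x - ε)
  else -(s7mu lam * s7A lam ε * Real.exp (s7mu lam * (s7s ε - x)))

def s7g2 (lam ε x : ℝ) : ℝ :=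
  if x < -s7s ε then 2 * lam * s7A lam ε * Real.exp (s7mu lam * (x + s7s ε))
  else if x < -ε then (-2 : ℝ)
  else if x < 0 then -2 * Real.exp (-2*x/ε)
  else if x ≤ ε then -2 * Real.exp (2*x/ε)
  else if x ≤ s7s ε then (-2 : ℝ)
  else 2 * lam * s7A lam ε * Real.exp (s7mu lam * (s7s ε - x))

variable {lam ε x : ℝ}

/- branch-resolution lemmas -/
lemma s7g_eq1 (h : x < -s7s ε) :
    s7g lam ε x = s7A lam ε * Real.exp (s7mu lam * (x + s7s ε)) := by
  unfold s7g; rw [if_pos h]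
lemma s7g_eq2 (h1 : ¬ x < -s7s ε) (h2 : x < -ε) :
    s7g lam ε x = s7ge lam ε - s7k * ε * (-x - ε) - (-x - ε)^2 := by
  unfold s7g; rw [if_neg h1, if_pos h2]
lemma s7g_eq3 (h1 : ¬ x < -s7s ε) (h2 : ¬ x < -ε) (h3 : x < 0) :
    s7g lam ε x = s7a lam ε - ε * x - ε^2/2 * (Real.exp (-2*x/ε) - 1) := by
  unfold s7g; rw [if_neg h1, if_neg h2, if_pos h3]
lemma s7g_eq4 (h1 : ¬ x < -s7s ε) (h2 : ¬ x < -ε) (h3 : ¬ x < 0) (h4 : x ≤ ε) :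
    s7g lam ε x = s7a lam ε + ε * x - ε^2/2 * (Real.exp (2*x/ε) - 1) := by
  unfold s7g; rw [if_neg h1, if_neg h2, if_neg h3, if_pos h4]
lemma s7g_eq5 (h1 : ¬ x < -s7s ε) (h2 : ¬ x < -ε) (h3 : ¬ x < 0) (h4 : ¬ x ≤ ε)
    (h5 : x ≤ s7s ε) :
    s7g lam ε x = s7ge lam ε - s7k * ε * (x - ε) - (x - ε)^2 := by
  unfold s7g; rw [if_neg h1, if_neg h2, if_neg h3, if_neg h4, if_pos h5]
lemma s7g_eq6 (h1 : ¬ x < -s7s ε) (h2 : ¬ x < -ε) (h3 : ¬ x < 0) (h4 : ¬ x ≤ ε)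
    (h5 : ¬ x ≤ s7s ε) :
    s7g lam ε x = s7A lam ε * Real.exp (s7mu lam * (s7s ε - x)) := by
  unfold s7g; rw [if_neg h1, if_neg h2, if_neg h3, if_neg h4, if_neg h5]

lemma s7g1_eq1 (h : x < -s7s ε) :
    s7g1 lam ε x = s7mu lam * s7A lam ε * Real.exp (s7mu lam * (x + s7s ε)) := by
  unfold s7g1; rw [if_pos h]
lemma s7g1_eq2 (h1 : ¬ x < -s7s ε) (h2 : x < -ε) :
    s7g1 lam ε x = s7k * ε + 2 * (-x - ε) := by
  unfold s7g1; rw [if_neg h1, if_pos h2]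
lemma s7g1_eq3 (h1 : ¬ x < -s7s ε) (h2 : ¬ x < -ε) (h3 : x < 0) :
    s7g1 lam ε x = -ε + ε * Real.exp (-2*x/ε) := by
  unfold s7g1; rw [if_neg h1, if_neg h2, if_pos h3]
lemma s7g1_eq4 (h1 : ¬ x < -s7s ε) (h2 : ¬ x < -ε) (h3 : ¬ x < 0) (h4 : x ≤ ε) :
    s7g1 lam ε x = ε - ε * Real.exp (2*x/ε) := by
  unfold s7g1; rw [if_neg h1, if_neg h2, if_neg h3, if_pos h4]
lemma s7g1_eq5 (h1 : ¬ x < -s7s ε) (h2 : ¬ x < -ε) (h3 : ¬ x < 0) (h4 : ¬ x ≤ ε)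
    (h5 : x ≤ s7s ε) :
    s7g1 lam ε x = -(s7k * ε) - 2 * (x - ε) := by
  unfold s7g1; rw [if_neg h1, if_neg h2, if_neg h3, if_neg h4, if_pos h5]
lemma s7g1_eq6 (h1 : ¬ x < -s7s ε) (h2 : ¬ x < -ε) (h3 : ¬ x < 0) (h4 : ¬ x ≤ ε)
    (h5 : ¬ x ≤ s7s ε) :
    s7g1 lam ε x = -(s7mu lam * s7A lam ε * Real.exp (s7mu lam * (s7s ε - x))) := by
  unfold s7g1; rw [if_neg h1, if_neg h2, if_neg h3, if_neg h4, if_neg h5]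

lemma s7g2_eq1 (h : x < -s7s ε) :
    s7g2 lam ε x = 2 * lam * s7A lam ε * Real.exp (s7mu lam * (x + s7s ε)) := by
  unfold s7g2; rw [if_pos h]
lemma s7g2_eq2 (h1 : ¬ x < -s7s ε) (h2 : x < -ε) : s7g2 lam ε x = -2 := by
  unfold s7g2; rw [if_neg h1, if_pos h2]
lemma s7g2_eq3 (h1 : ¬ x < -s7s ε) (h2 : ¬ x < -ε) (h3 : x < 0) :
    s7g2 lam ε x = -2 * Real.exp (-2*x/ε) := by
  unfold s7g2; rw [if_neg h1, if_neg h2, if_pos h3]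
lemma s7g2_eq4 (h1 : ¬ x < -s7s ε) (h2 : ¬ x < -ε) (h3 : ¬ x < 0) (h4 : x ≤ ε) :
    s7g2 lam ε x = -2 * Real.exp (2*x/ε) := by
  unfold s7g2; rw [if_neg h1, if_neg h2, if_neg h3, if_pos h4]
lemma s7g2_eq5 (h1 : ¬ x < -s7s ε) (h2 : ¬ x < -ε) (h3 : ¬ x < 0) (h4 : ¬ x ≤ ε)
    (h5 : x ≤ s7s ε) : s7g2 lam ε x = -2 := by
  unfold s7g2; rw [if_neg h1, if_neg h2, if_neg h3, if_neg h4, if_pos h5]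
lemma s7g2_eq6 (h1 : ¬ x < -s7s ε) (h2 : ¬ x < -ε) (h3 : ¬ x < 0) (h4 : ¬ x ≤ ε)
    (h5 : ¬ x ≤ s7s ε) :
    s7g2 lam ε x = 2 * lam * s7A lam ε * Real.exp (s7mu lam * (s7s ε - x)) := by
  unfold s7g2; rw [if_neg h1, if_neg h2, if_neg h3, if_neg h4, if_neg h5]

/- basic facts -/
lemma s7s_pos (h0 : 0 < ε) : 0 < s7s ε := Real.sqrt_pos.mpr h0
lemma s7s_le_one (h1 : ε < 1) : s7s ε ≤ 1 := Real.sqrt_le_one.mpr h1.le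
lemma s7eps_lt_s (h0 : 0 < ε) (h1 : ε < 1) : ε < s7s ε := by
  have h2 : Real.sqrt (ε^2) < Real.sqrt ε := by
    apply Real.sqrt_lt_sqrt (by positivity)
    nlinarith
  rwa [Real.sqrt_sq h0.le] at h2
lemma s7s_sq (h0 : 0 < ε) : s7s ε ^ 2 = ε := Real.sq_sqrt h0.le
lemma s7mu_pos (hl : 0 < lam) : 0 < s7mu lam := Real.sqrt_pos.mpr (by linarith)
lemma s7mu_sq (hl : 0 < lam) : s7mu lam * s7mu lam = 2 * lam :=
  Real.mul_self_sqrt (by linarith)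
lemma s7exp2_ge3 : (3:ℝ) ≤ Real.exp 2 := by
  have := Real.add_one_le_exp (2:ℝ); linarith
lemma s7k_pos : 0 < s7k := by have := s7exp2_ge3; unfold s7k; linarith
lemma s7A_pos (hl : 0 < lam) (h0 : 0 < ε) (h1 : ε < 1) : 0 < s7A lam ε := by
  apply div_pos _ (s7mu_pos hl)
  have := s7k_pos
  have := s7eps_lt_s h0 h1
  nlinarith
lemma s7muA (hl : 0 < lam) :
    s7mu lam * s7A lam ε = s7k * ε + 2 * (s7s ε - ε) := by
  unfold s7A
  rw [mul_div_cancel₀]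
  exact ne_of_gt (s7mu_pos hl)
lemma s7ge_ge_A (h0 : 0 < ε) (h1 : ε < 1) : s7A lam ε ≤ s7ge lam ε := by
  unfold s7ge
  nlinarith [mul_pos (mul_pos s7k_pos h0) (sub_pos.mpr (s7eps_lt_s h0 h1)),
    sq_nonneg (s7s ε - ε)]
lemma s7a_ge_ge : s7ge lam ε ≤ s7a lam ε := by
  unfold s7a
  have := s7exp2_ge3
  nlinarith

/- generic gluing helpers -/
lemma s7interior_helper {f F : ℝ → ℝ} {D p lo hi : ℝ} (hlo : lo < p) (hhi : p < hi)
    (hF : HasDerivAt F D p) (heq : ∀ y, lo < y → y < hi → f y = F y) :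
    HasDerivAt f D p := by
  apply hF.congr_of_eventuallyEq
  filter_upwards [Ioo_mem_nhds hlo hhi] with y hy
  exact heq y hy.1 hy.2

lemma s7junction_helper {f FL FR : ℝ → ℝ} {D p lo hi : ℝ} (hlo : lo < p) (hhi : p < hi)
    (hFL : HasDerivAt FL D p) (hFR : HasDerivAt FR D p)
    (hLeq : ∀ y, lo < y → y < p → f y = FL y)
    (hReq : ∀ y, p ≤ y → y < hi → f y = FR y)
    (hvL : f p = FL p) : HasDerivAt f D p := by
  have hvR : f p = FR p := hReq p le_rfl hhi
  have hL : HasDerivWithinAt f D (Iic p) p := by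
    apply (hFL.hasDerivWithinAt).congr_of_eventuallyEq _ hvL
    apply Filter.eventuallyEq_of_mem (Ioc_mem_nhdsLE hlo)
    intro y hy
    rcases eq_or_lt_of_le hy.2 with h | h
    · rw [h]; exact hvL
    · exact hLeq y hy.1 h
  have hR : HasDerivWithinAt f D (Ici p) p := by
    apply (hFR.hasDerivWithinAt).congr_of_eventuallyEq _ hvR
    apply Filter.eventuallyEq_of_mem (Ico_mem_nhdsGE hhi)
    intro y hy
    exact hReq y hy.1 hy.2
  have hU := hL.union hR
  rw [Set.Iic_union_Ici] at hU
  exact hasDerivWithinAt_univ.mp hU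

/- closed-form derivatives for the six pieces of g -/
lemma s7F1_der (lam ε : ℝ) (x : ℝ) :
    HasDerivAt (fun y => s7A lam ε * Real.exp (s7mu lam * (y + s7s ε)))
      (s7mu lam * s7A lam ε * Real.exp (s7mu lam * (x + s7s ε))) x := by
  have h := ((((hasDerivAt_id x).add_const (s7s ε)).const_mul (s7mu lam)).exp).const_mul
    (s7A lam ε)
  simp only [id_eq] at h
  refine h.congr_deriv ?_; ring

lemma s7F2_der (lam ε : ℝ) (x : ℝ) :
    HasDerivAt (fun y => s7ge lam ε - s7k * ε * (-y - ε) - (-y - ε)^2)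
      (s7k * ε + 2 * (-x - ε)) x := by
  have hin : HasDerivAt (fun y : ℝ => -y - ε) (-1) x := (hasDerivAt_id x).neg.sub_const ε
  have h := ((hasDerivAt_const x (s7ge lam ε)).sub (hin.const_mul (s7k * ε))).sub (hin.pow 2)
  refine h.congr_deriv ?_; ring

lemma s7F3_der (lam : ℝ) {ε : ℝ} (h0 : 0 < ε) (x : ℝ) :
    HasDerivAt (fun y => s7a lam ε - ε * y - ε^2/2 * (Real.exp (-2*y/ε) - 1))
      (-ε + ε * Real.exp (-2*x/ε)) x := by
  have hin : HasDerivAt (fun y : ℝ => -2*y/ε) (-2/ε) x := by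
    have := ((hasDerivAt_id x).const_mul (-2)).div_const ε
    refine this.congr_deriv ?_; ring
  have h := ((hasDerivAt_const x (s7a lam ε)).sub ((hasDerivAt_id x).const_mul ε)).sub
    ((hin.exp.sub_const 1).const_mul (ε^2/2))
  refine h.congr_deriv ?_
  field_simp
  ring

lemma s7F4_der (lam : ℝ) {ε : ℝ} (h0 : 0 < ε) (x : ℝ) :
    HasDerivAt (fun y => s7a lam ε + ε * y - ε^2/2 * (Real.exp (2*y/ε) - 1))
      (ε - ε * Real.exp (2*x/ε)) x := by
  have hin : HasDerivAt (fun y : ℝ => 2*y/ε) (2/ε) x := by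
    have := ((hasDerivAt_id x).const_mul (2:ℝ)).div_const ε
    refine this.congr_deriv ?_; ring
  have h := (((hasDerivAt_id x).const_mul ε).const_add (s7a lam ε)).sub
    ((hin.exp.sub_const 1).const_mul (ε^2/2))
  refine h.congr_deriv ?_
  field_simp

lemma s7F5_der (lam ε : ℝ) (x : ℝ) :
    HasDerivAt (fun y => s7ge lam ε - s7k * ε * (y - ε) - (y - ε)^2)
      (-(s7k * ε) - 2 * (x - ε)) x := by
  have hin : HasDerivAt (fun y : ℝ => y - ε) 1 x := (hasDerivAt_id x).sub_const ε
  have h := ((hasDerivAt_const x (s7ge lam ε)).sub (hin.const_mul (s7k * ε))).sub (hin.pow 2)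
  refine h.congr_deriv ?_; ring

lemma s7F6_der (lam ε : ℝ) (x : ℝ) :
    HasDerivAt (fun y => s7A lam ε * Real.exp (s7mu lam * (s7s ε - y)))
      (-(s7mu lam * s7A lam ε * Real.exp (s7mu lam * (s7s ε - x)))) x := by
  have h := ((((hasDerivAt_const x (s7s ε)).sub (hasDerivAt_id x)).const_mul
    (s7mu lam)).exp).const_mul (s7A lam ε)
  simp only [Pi.sub_apply, id_eq] at h
  refine h.congr_deriv ?_; ring

/- the master derivative lemma for g -/
lemma s7g_hasDeriv (hl : 0 < lam) (h0 : 0 < ε) (h1 : ε < 1) (x : ℝ) :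
    HasDerivAt (s7g lam ε) (s7g1 lam ε x) x := by
  have hs : 0 < s7s ε := s7s_pos h0
  have hes : ε < s7s ε := s7eps_lt_s h0 h1
  have hεne : ε ≠ 0 := ne_of_gt h0
  rcases lt_trichotomy x (-s7s ε) with hx1 | hx1 | hx1
  · -- region 1
    rw [s7g1_eq1 hx1]
    exact s7interior_helper (show x - 1 < x by linarith) hx1 (s7F1_der lam ε x)
      (fun y _ hy2 => s7g_eq1 hy2)
  · -- junction at -s
    subst hx1
    have hc1 : ¬ (-s7s ε) < -s7s ε := lt_irrefl _
    have hc2 : (-s7s ε) < -ε := by linarith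
    rw [s7g1_eq2 hc1 hc2]
    have hFL : HasDerivAt (fun y => s7A lam ε * Real.exp (s7mu lam * (y + s7s ε)))
        (s7k * ε + 2 * (-(-s7s ε) - ε)) (-s7s ε) := by
      have h := s7F1_der lam ε (-s7s ε)
      rw [show s7mu lam * (-s7s ε + s7s ε) = 0 by ring, Real.exp_zero, mul_one] at h
      convert h using 1
      rw [s7muA hl]; ring
    have hFR : HasDerivAt (fun y => s7ge lam ε - s7k * ε * (-y - ε) - (-y - ε)^2)
        (s7k * ε + 2 * (-(-s7s ε) - ε)) (-s7s ε) := s7F2_der lam ε (-s7s ε)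
    have hvL : s7g lam ε (-s7s ε) = s7A lam ε * Real.exp (s7mu lam * (-s7s ε + s7s ε)) := by
      rw [s7g_eq2 hc1 hc2, show s7mu lam * (-s7s ε + s7s ε) = 0 by ring, Real.exp_zero,
        mul_one]
      unfold s7ge; ring
    exact s7junction_helper (show -s7s ε - 1 < -s7s ε by linarith) hc2 hFL hFR
      (fun y _ hy2 => s7g_eq1 hy2)
      (fun y hy1 hy2 => s7g_eq2 (not_lt.mpr hy1) hy2) hvL
  · rcases lt_trichotomy x (-ε) with hx2 | hx2 | hx2
    · -- region 2
      rw [s7g1_eq2 (not_lt.mpr hx1.le) hx2]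
      exact s7interior_helper hx1 hx2 (s7F2_der lam ε x)
        (fun y hy1 hy2 => s7g_eq2 (not_lt.mpr hy1.le) hy2)
    · -- junction at -ε
      subst hx2
      have hc1 : ¬ (-ε) < -s7s ε := not_lt.mpr (by linarith)
      have hc2 : ¬ (-ε) < -ε := lt_irrefl _
      have hc3 : (-ε) < 0 := by linarith
      have hexp : (-2*(-ε)/ε : ℝ) = 2 := by field_simp
      rw [s7g1_eq3 hc1 hc2 hc3, hexp]
      have hFL : HasDerivAt (fun y => s7ge lam ε - s7k * ε * (-y - ε) - (-y - ε)^2)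
          (-ε + ε * Real.exp 2) (-ε) := by
        have h := s7F2_der lam ε (-ε)
        convert h using 1
        unfold s7k; ring
      have hFR : HasDerivAt (fun y => s7a lam ε - ε * y - ε^2/2 * (Real.exp (-2*y/ε) - 1))
          (-ε + ε * Real.exp 2) (-ε) := by
        have h := s7F3_der lam h0 (-ε)
        rwa [hexp] at h
      have hvL : s7g lam ε (-ε) = s7ge lam ε - s7k * ε * (-(-ε) - ε) - (-(-ε) - ε)^2 := by
        rw [s7g_eq3 hc1 hc2 hc3, hexp]
        unfold s7a; ring
      exact s7junction_helper (show -s7s ε < -ε by linarith) hc3 hFL hFR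
        (fun y hy1 hy2 => s7g_eq2 (not_lt.mpr (by linarith)) hy2)
        (fun y hy1 hy2 => s7g_eq3 (not_lt.mpr (by linarith)) (not_lt.mpr hy1) hy2) hvL
    · rcases lt_trichotomy x 0 with hx3 | hx3 | hx3
      · -- region 3
        rw [s7g1_eq3 (not_lt.mpr (by linarith)) (not_lt.mpr hx2.le) hx3]
        exact s7interior_helper hx2 hx3 (s7F3_der lam h0 x)
          (fun y hy1 hy2 => s7g_eq3 (not_lt.mpr (by linarith)) (not_lt.mpr hy1.le) hy2)
      · -- junction at 0
        subst hx3
        have hc1 : ¬ (0:ℝ) < -s7s ε := not_lt.mpr (by linarith)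
        have hc2 : ¬ (0:ℝ) < -ε := not_lt.mpr (by linarith)
        have hc3 : ¬ (0:ℝ) < 0 := lt_irrefl _
        have he1 : (2*(0:ℝ)/ε) = 0 := by simp
        have he2 : (-2*(0:ℝ)/ε) = 0 := by simp
        rw [s7g1_eq4 hc1 hc2 hc3 h0.le, he1, Real.exp_zero]
        have hFL : HasDerivAt (fun y => s7a lam ε - ε * y - ε^2/2 * (Real.exp (-2*y/ε) - 1))
            (ε - ε * 1) 0 := by
          have h := s7F3_der lam h0 0
          rw [he2, Real.exp_zero] at h
          convert h using 1; ring
        have hFR : HasDerivAt (fun y => s7a lam ε + ε * y - ε^2/2 * (Real.exp (2*y/ε) - 1))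
            (ε - ε * 1) 0 := by
          have h := s7F4_der lam h0 0
          rwa [he1, Real.exp_zero] at h
        have hvL : s7g lam ε 0 = s7a lam ε - ε * 0 - ε^2/2 * (Real.exp (-2*0/ε) - 1) := by
          rw [s7g_eq4 hc1 hc2 hc3 h0.le, he1, he2, Real.exp_zero]
          ring
        exact s7junction_helper (show -ε < (0:ℝ) by linarith) h0 hFL hFR
          (fun y hy1 hy2 => s7g_eq3 (not_lt.mpr (by linarith)) (not_lt.mpr (by linarith)) hy2)
          (fun y hy1 hy2 => s7g_eq4 (not_lt.mpr (by linarith)) (not_lt.mpr (by linarith))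
            (not_lt.mpr hy1) hy2.le) hvL
      · rcases lt_trichotomy x ε with hx4 | hx4 | hx4
        · -- region 4
          rw [s7g1_eq4 (not_lt.mpr (by linarith)) (not_lt.mpr (by linarith))
            (not_lt.mpr hx3.le) hx4.le]
          exact s7interior_helper hx3 hx4 (s7F4_der lam h0 x)
            (fun y hy1 hy2 => s7g_eq4 (not_lt.mpr (by linarith)) (not_lt.mpr (by linarith))
              (not_lt.mpr hy1.le) hy2.le)
        · -- junction at ε
          rw [hx4]
          have hc1 : ¬ ε < -s7s ε := not_lt.mpr (by linarith)
          have hc2 : ¬ ε < -ε := not_lt.mpr (by linarith)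
          have hc3 : ¬ ε < 0 := not_lt.mpr h0.le
          have hexp : (2*ε/ε : ℝ) = 2 := by field_simp
          rw [s7g1_eq4 hc1 hc2 hc3 le_rfl, hexp]
          have hFL : HasDerivAt (fun y => s7a lam ε + ε * y - ε^2/2 * (Real.exp (2*y/ε) - 1))
              (ε - ε * Real.exp 2) ε := by
            have h := s7F4_der lam h0 ε
            rwa [hexp] at h
          have hFR : HasDerivAt (fun y => s7ge lam ε - s7k * ε * (y - ε) - (y - ε)^2)
              (ε - ε * Real.exp 2) ε := by
            have h := s7F5_der lam ε ε
            convert h using 1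
            unfold s7k; ring
          have hvL : s7g lam ε ε = s7a lam ε + ε * ε - ε^2/2 * (Real.exp (2*ε/ε) - 1) := by
            rw [s7g_eq4 hc1 hc2 hc3 le_rfl]
          exact s7junction_helper h0 hes hFL hFR
            (fun y hy1 hy2 => s7g_eq4 (not_lt.mpr (by linarith)) (not_lt.mpr (by linarith))
              (not_lt.mpr hy1.le) hy2.le)
            (fun y hy1 hy2 => by
              rcases eq_or_lt_of_le hy1 with h | h
              · rw [← h, s7g_eq4 hc1 hc2 hc3 le_rfl, hexp]
                unfold s7a; ring
              · exact s7g_eq5 (not_lt.mpr (by linarith)) (not_lt.mpr (by linarith))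
                  (not_lt.mpr (by linarith)) (not_le.mpr h) hy2.le) hvL
        · rcases lt_trichotomy x (s7s ε) with hx5 | hx5 | hx5
          · -- region 5
            rw [s7g1_eq5 (not_lt.mpr (by linarith)) (not_lt.mpr (by linarith))
              (not_lt.mpr (by linarith)) (not_le.mpr hx4) hx5.le]
            exact s7interior_helper hx4 hx5 (s7F5_der lam ε x)
              (fun y hy1 hy2 => s7g_eq5 (not_lt.mpr (by linarith)) (not_lt.mpr (by linarith))
                (not_lt.mpr (by linarith)) (not_le.mpr hy1) hy2.le)
          · -- junction at s
            subst hx5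
            have hc1 : ¬ s7s ε < -s7s ε := not_lt.mpr (by linarith)
            have hc2 : ¬ s7s ε < -ε := not_lt.mpr (by linarith)
            have hc3 : ¬ s7s ε < 0 := not_lt.mpr hs.le
            have hc4 : ¬ s7s ε ≤ ε := not_le.mpr hes
            rw [s7g1_eq5 hc1 hc2 hc3 hc4 le_rfl]
            have hFL : HasDerivAt (fun y => s7ge lam ε - s7k * ε * (y - ε) - (y - ε)^2)
                (-(s7k * ε) - 2 * (s7s ε - ε)) (s7s ε) := s7F5_der lam ε (s7s ε)
            have hFR : HasDerivAt (fun y => s7A lam ε * Real.exp (s7mu lam * (s7s ε - y)))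
                (-(s7k * ε) - 2 * (s7s ε - ε)) (s7s ε) := by
              have h := s7F6_der lam ε (s7s ε)
              rw [show s7mu lam * (s7s ε - s7s ε) = 0 by ring, Real.exp_zero, mul_one] at h
              convert h using 1
              rw [s7muA hl]; ring
            have hvL : s7g lam ε (s7s ε) =
                s7ge lam ε - s7k * ε * (s7s ε - ε) - (s7s ε - ε)^2 := by
              rw [s7g_eq5 hc1 hc2 hc3 hc4 le_rfl]
            exact s7junction_helper hes (show s7s ε < s7s ε + 1 by linarith) hFL hFR
              (fun y hy1 hy2 => s7g_eq5 (not_lt.mpr (by linarith)) (not_lt.mpr (by linarith))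
                (not_lt.mpr (by linarith)) (not_le.mpr hy1) hy2.le)
              (fun y hy1 hy2 => by
                rcases eq_or_lt_of_le hy1 with h | h
                · rw [← h, s7g_eq5 hc1 hc2 hc3 hc4 le_rfl,
                    show s7mu lam * (s7s ε - s7s ε) = 0 by ring, Real.exp_zero, mul_one]
                  unfold s7ge; ring
                · exact s7g_eq6 (not_lt.mpr (by linarith)) (not_lt.mpr (by linarith))
                    (not_lt.mpr (by linarith)) (not_le.mpr (by linarith)) (not_le.mpr h)) hvL
          · -- region 6
            rw [s7g1_eq6 (not_lt.mpr (by linarith)) (not_lt.mpr (by linarith))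
              (not_lt.mpr (by linarith)) (not_le.mpr (by linarith)) (not_le.mpr hx5)]
            exact s7interior_helper hx5 (show x < x + 1 by linarith) (s7F6_der lam ε x)
              (fun y hy1 hy2 => s7g_eq6 (not_lt.mpr (by linarith)) (not_lt.mpr (by linarith))
                (not_lt.mpr (by linarith)) (not_le.mpr (by linarith)) (not_le.mpr hy1))

/- derivatives of the pieces of g1 -/
lemma s7G1_der (hl : 0 < lam) (ε : ℝ) (x : ℝ) :
    HasDerivAt (fun y => s7mu lam * s7A lam ε * Real.exp (s7mu lam * (y + s7s ε)))
      (2 * lam * s7A lam ε * Real.exp (s7mu lam * (x + s7s ε))) x := by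
  have h := ((((hasDerivAt_id x).add_const (s7s ε)).const_mul (s7mu lam)).exp).const_mul
    (s7mu lam * s7A lam ε)
  simp only [id_eq] at h
  refine h.congr_deriv ?_
  linear_combination (Real.exp (s7mu lam * (x + s7s ε)) * s7A lam ε) * (s7mu_sq hl)

lemma s7G2_der (ε x : ℝ) :
    HasDerivAt (fun y : ℝ => s7k * ε + 2 * (-y - ε)) (-2 : ℝ) x := by
  have h := (((hasDerivAt_id x).neg.sub_const ε).const_mul (2:ℝ)).const_add (s7k * ε)
  simp only [Pi.neg_apply, id_eq] at h
  refine h.congr_deriv ?_; ring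

lemma s7G3_der {ε : ℝ} (h0 : 0 < ε) (x : ℝ) :
    HasDerivAt (fun y : ℝ => -ε + ε * Real.exp (-2*y/ε)) (-2 * Real.exp (-2*x/ε)) x := by
  have hin : HasDerivAt (fun y : ℝ => -2*y/ε) (-2/ε) x := by
    have := ((hasDerivAt_id x).const_mul (-2 : ℝ)).div_const ε
    simp only [id_eq] at this
    refine this.congr_deriv ?_; ring
  have h := (hin.exp.const_mul ε).const_add (-ε)
  refine h.congr_deriv ?_
  field_simp

lemma s7G4_der {ε : ℝ} (h0 : 0 < ε) (x : ℝ) :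
    HasDerivAt (fun y : ℝ => ε - ε * Real.exp (2*y/ε)) (-2 * Real.exp (2*x/ε)) x := by
  have hin : HasDerivAt (fun y : ℝ => 2*y/ε) (2/ε) x := by
    have := ((hasDerivAt_id x).const_mul (2 : ℝ)).div_const ε
    simp only [id_eq] at this
    refine this.congr_deriv ?_; ring
  have h := (hasDerivAt_const x ε).sub (hin.exp.const_mul ε)
  refine h.congr_deriv ?_
  field_simp
  ring

lemma s7G5_der (ε x : ℝ) :
    HasDerivAt (fun y : ℝ => -(s7k * ε) - 2 * (y - ε)) (-2 : ℝ) x := by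
  have h := (hasDerivAt_const x (-(s7k * ε))).sub (((hasDerivAt_id x).sub_const ε).const_mul 2)
  simp only [id_eq] at h
  refine h.congr_deriv ?_; ring

lemma s7G6_der (hl : 0 < lam) (ε : ℝ) (x : ℝ) :
    HasDerivAt (fun y => -(s7mu lam * s7A lam ε * Real.exp (s7mu lam * (s7s ε - y))))
      (2 * lam * s7A lam ε * Real.exp (s7mu lam * (s7s ε - x))) x := by
  have h := (((((hasDerivAt_const x (s7s ε)).sub (hasDerivAt_id x)).const_mul
    (s7mu lam)).exp).const_mul (s7mu lam * s7A lam ε)).neg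
  simp only [Pi.sub_apply, id_eq] at h
  refine h.congr_deriv ?_
  linear_combination (Real.exp (s7mu lam * (s7s ε - x)) * s7A lam ε) * (s7mu_sq hl)

lemma s7g1_hasDeriv (hl : 0 < lam) (h0 : 0 < ε) (h1 : ε < 1) (x : ℝ)
    (hx : x ∉ ({-s7s ε, -ε, 0, ε, s7s ε} : Set ℝ)) :
    HasDerivAt (s7g1 lam ε) (s7g2 lam ε x) x := by
  simp only [Set.mem_insert_iff, Set.mem_singleton_iff, not_or] at hx
  obtain ⟨hne1, hne2, hne3, hne4, hne5⟩ := hx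
  have hs : 0 < s7s ε := s7s_pos h0
  have hes : ε < s7s ε := s7eps_lt_s h0 h1
  rcases lt_or_gt_of_ne hne1 with hx1 | hx1
  · rw [s7g2_eq1 hx1]
    exact s7interior_helper (show x - 1 < x by linarith) hx1 (s7G1_der hl ε x)
      (fun y _ hy2 => s7g1_eq1 hy2)
  · rcases lt_or_gt_of_ne hne2 with hx2 | hx2
    · rw [s7g2_eq2 (not_lt.mpr hx1.le) hx2]
      exact s7interior_helper hx1 hx2 (s7G2_der ε x)
        (fun y hy1 hy2 => s7g1_eq2 (not_lt.mpr hy1.le) hy2)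
    · rcases lt_or_gt_of_ne hne3 with hx3 | hx3
      · rw [s7g2_eq3 (not_lt.mpr (by linarith)) (not_lt.mpr hx2.le) hx3]
        exact s7interior_helper hx2 hx3 (s7G3_der h0 x)
          (fun y hy1 hy2 => s7g1_eq3 (not_lt.mpr (by linarith)) (not_lt.mpr hy1.le) hy2)
      · rcases lt_or_gt_of_ne hne4 with hx4 | hx4
        · rw [s7g2_eq4 (not_lt.mpr (by linarith)) (not_lt.mpr (by linarith))
            (not_lt.mpr hx3.le) hx4.le]
          exact s7interior_helper hx3 hx4 (s7G4_der h0 x)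
            (fun y hy1 hy2 => s7g1_eq4 (not_lt.mpr (by linarith)) (not_lt.mpr (by linarith))
              (not_lt.mpr hy1.le) hy2.le)
        · rcases lt_or_gt_of_ne hne5 with hx5 | hx5
          · rw [s7g2_eq5 (not_lt.mpr (by linarith)) (not_lt.mpr (by linarith))
              (not_lt.mpr (by linarith)) (not_le.mpr hx4) hx5.le]
            exact s7interior_helper hx4 hx5 (s7G5_der ε x)
              (fun y hy1 hy2 => s7g1_eq5 (not_lt.mpr (by linarith)) (not_lt.mpr (by linarith))
                (not_lt.mpr (by linarith)) (not_le.mpr hy1) hy2.le)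
          · rw [s7g2_eq6 (not_lt.mpr (by linarith)) (not_lt.mpr (by linarith))
              (not_lt.mpr (by linarith)) (not_le.mpr (by linarith)) (not_le.mpr hx5)]
            exact s7interior_helper hx5 (show x < x + 1 by linarith) (s7G6_der hl ε x)
              (fun y hy1 hy2 => s7g1_eq6 (not_lt.mpr (by linarith)) (not_lt.mpr (by linarith))
                (not_lt.mpr (by linarith)) (not_le.mpr (by linarith)) (not_le.mpr hy1))

lemma s7exp_le_one {t : ℝ} (ht : t ≤ 0) : Real.exp t ≤ 1 := by
  calc Real.exp t ≤ Real.exp 0 := Real.exp_le_exp.mpr ht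
    _ = 1 := Real.exp_zero

lemma s7one_le_exp {t : ℝ} (ht : 0 ≤ t) : 1 ≤ Real.exp t := by
  calc (1:ℝ) = Real.exp 0 := Real.exp_zero.symm
    _ ≤ Real.exp t := Real.exp_le_exp.mpr ht

set_option maxHeartbeats 1600000 in
lemma s7g_bounds (hl : 0 < lam) (h0 : 0 < ε) (h1 : ε < 1) (x : ℝ) :
    0 ≤ s7g lam ε x ∧ s7g lam ε x ≤ s7a lam ε + ε^2 := by
  have hs : 0 < s7s ε := s7s_pos h0
  have hes : ε < s7s ε := s7eps_lt_s h0 h1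
  have hk : 0 < s7k := s7k_pos
  have hA : 0 < s7A lam ε := s7A_pos hl h0 h1
  have hgeA : s7A lam ε ≤ s7ge lam ε := s7ge_ge_A h0 h1
  have hage : s7ge lam ε ≤ s7a lam ε := s7a_ge_ge
  have he3 : (3:ℝ) ≤ Real.exp 2 := s7exp2_ge3
  by_cases hb1 : x < -s7s ε
  · rw [s7g_eq1 hb1]
    have hexp1 : Real.exp (s7mu lam * (x + s7s ε)) ≤ 1 :=
      s7exp_le_one (mul_nonpos_of_nonneg_of_nonpos (s7mu_pos hl).le (by linarith))
    constructor
    · exact mul_nonneg hA.le (Real.exp_pos _).le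
    · calc s7A lam ε * Real.exp (s7mu lam * (x + s7s ε)) ≤ s7A lam ε * 1 :=
          mul_le_mul_of_nonneg_left hexp1 hA.le
        _ ≤ s7a lam ε + ε^2 := by nlinarith [sq_nonneg ε]
  · by_cases hb2 : x < -ε
    · rw [s7g_eq2 hb1 hb2]
      have hu1 : 0 ≤ s7s ε + x := by linarith [not_lt.mp hb1]
      have hu2 : 0 ≤ s7s ε - x - 2*ε := by linarith
      have hu0 : 0 ≤ -x - ε := by linarith
      constructor
      · unfold s7ge
        nlinarith [mul_nonneg (mul_nonneg hk.le h0.le) hu1, mul_nonneg hu1 hu2, hA]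
      · nlinarith [mul_nonneg (mul_nonneg hk.le h0.le) hu0, sq_nonneg (-x - ε), sq_nonneg ε]
    · by_cases hb3 : x < 0
      · rw [s7g_eq3 hb1 hb2 hb3]
        have hxe : -ε ≤ x := by linarith [not_lt.mp hb2]
        have hE1 : 1 ≤ Real.exp (-2*x/ε) := s7one_le_exp (div_nonneg (by linarith) h0.le)
        have hq := Real.add_one_le_exp (2 + 2*x/ε)
        have hqe : Real.exp (-2*x/ε) * Real.exp (2 + 2*x/ε) = Real.exp 2 := by
          rw [← Real.exp_add, show -2*x/ε + (2 + 2*x/ε) = 2 by ring]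
        have h5 : Real.exp (-2*x/ε) * (3 + 2*x/ε) ≤ Real.exp 2 := by
          calc Real.exp (-2*x/ε) * (3 + 2*x/ε)
              ≤ Real.exp (-2*x/ε) * Real.exp (2 + 2*x/ε) :=
                mul_le_mul_of_nonneg_left (by linarith) (Real.exp_pos _).le
            _ = Real.exp 2 := hqe
        have hkey : Real.exp (-2*x/ε) * (3*ε + 2*x) ≤ ε * Real.exp 2 := by
          have h6 := mul_le_mul_of_nonneg_left h5 h0.le
          have h7 : ε * (Real.exp (-2*x/ε) * (3 + 2*x/ε))
              = Real.exp (-2*x/ε) * (3*ε + 2*x) := by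
            field_simp <;> ring
          linarith [h7 ▸ h6]
        have hprod : 0 ≤ ε * ((Real.exp (-2*x/ε) - 1) * (x + ε)) :=
          mul_nonneg h0.le (mul_nonneg (by linarith) (by linarith))
        constructor
        · have hge0 : 0 ≤ s7ge lam ε := le_trans hA.le hgeA
          unfold s7a
          nlinarith [hkey, hprod]
        · nlinarith [hE1, mul_le_mul_of_nonneg_left (show -x ≤ ε by linarith) h0.le,
            mul_nonneg (show (0:ℝ) ≤ ε^2/2 by positivity) (show 0 ≤ Real.exp (-2*x/ε) - 1 by linarith)]
      · by_cases hb4 : x ≤ ε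
        · rw [s7g_eq4 hb1 hb2 hb3 hb4]
          have hx0 : 0 ≤ x := not_lt.mp hb3
          have hE1 : 1 ≤ Real.exp (2*x/ε) := s7one_le_exp (div_nonneg (by linarith) h0.le)
          have hq := Real.add_one_le_exp (2 - 2*x/ε)
          have hqe : Real.exp (2*x/ε) * Real.exp (2 - 2*x/ε) = Real.exp 2 := by
            rw [← Real.exp_add, show 2*x/ε + (2 - 2*x/ε) = 2 by ring]
          have h5 : Real.exp (2*x/ε) * (3 - 2*x/ε) ≤ Real.exp 2 := by
            calc Real.exp (2*x/ε) * (3 - 2*x/ε)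
                ≤ Real.exp (2*x/ε) * Real.exp (2 - 2*x/ε) :=
                  mul_le_mul_of_nonneg_left (by linarith) (Real.exp_pos _).le
              _ = Real.exp 2 := hqe
          have hkey : Real.exp (2*x/ε) * (3*ε - 2*x) ≤ ε * Real.exp 2 := by
            have h6 := mul_le_mul_of_nonneg_left h5 h0.le
            have h7 : ε * (Real.exp (2*x/ε) * (3 - 2*x/ε))
                = Real.exp (2*x/ε) * (3*ε - 2*x) := by
              field_simp <;> ring
            linarith [h7 ▸ h6]
          have hprod : 0 ≤ ε * ((Real.exp (2*x/ε) - 1) * (ε - x)) :=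
            mul_nonneg h0.le (mul_nonneg (by linarith) (by linarith))
          constructor
          · have hge0 : 0 ≤ s7ge lam ε := le_trans hA.le hgeA
            unfold s7a
            nlinarith [hkey, hprod]
          · nlinarith [hE1, mul_le_mul_of_nonneg_left hb4 h0.le,
              mul_nonneg (show (0:ℝ) ≤ ε^2/2 by positivity)
                (show 0 ≤ Real.exp (2*x/ε) - 1 by linarith)]
        · by_cases hb5 : x ≤ s7s ε
          · rw [s7g_eq5 hb1 hb2 hb3 hb4 hb5]
            have hxε : ε < x := not_le.mp hb4
            have hu1 : 0 ≤ s7s ε - x := by linarith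
            have hu2 : 0 ≤ s7s ε + x - 2*ε := by linarith
            have hu0 : 0 ≤ x - ε := by linarith
            constructor
            · unfold s7ge
              nlinarith [mul_nonneg (mul_nonneg hk.le h0.le) hu1, mul_nonneg hu1 hu2, hA]
            · nlinarith [mul_nonneg (mul_nonneg hk.le h0.le) hu0, sq_nonneg (x - ε), sq_nonneg ε]
          · rw [s7g_eq6 hb1 hb2 hb3 hb4 hb5]
            have hexp1 : Real.exp (s7mu lam * (s7s ε - x)) ≤ 1 :=
              s7exp_le_one (mul_nonpos_of_nonneg_of_nonpos (s7mu_pos hl).le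
                (by linarith [not_le.mp hb5]))
            constructor
            · exact mul_nonneg hA.le (Real.exp_pos _).le
            · calc s7A lam ε * Real.exp (s7mu lam * (s7s ε - x)) ≤ s7A lam ε * 1 :=
                  mul_le_mul_of_nonneg_left hexp1 hA.le
                _ ≤ s7a lam ε + ε^2 := by nlinarith [sq_nonneg ε]

set_option maxHeartbeats 1600000 in
lemma s7op (hl : 0 < lam) (h0 : 0 < ε) (h1 : ε < 1) (x : ℝ)
    (hx : x ∉ ({-s7s ε, -ε, 0, ε, s7s ε} : Set ℝ)) (bV : ℝ → ℝ)
    (hbV : ∀ y, bV y = if 0 ≤ y ∧ y ≤ ε then -1/ε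
                       else if -ε ≤ y ∧ y < 0 then 1/ε else 0) :
    Set.indicator (Set.Ioo (-s7s ε) (s7s ε)) (fun _ => (1:ℝ)) x
      ≤ lam * s7g lam ε x - (1/2) * s7g2 lam ε x - bV x * s7g1 lam ε x := by
  simp only [Set.mem_insert_iff, Set.mem_singleton_iff, not_or] at hx
  obtain ⟨hne1, hne2, hne3, hne4, hne5⟩ := hx
  have hs : 0 < s7s ε := s7s_pos h0
  have hes : ε < s7s ε := s7eps_lt_s h0 h1
  have hεne : (ε:ℝ) ≠ 0 := ne_of_gt h0
  have hg0 := (s7g_bounds hl h0 h1 x).1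
  rcases lt_or_gt_of_ne hne1 with hx1 | hx1
  · -- x < -s
    rw [Set.indicator_of_notMem (fun hmem => absurd hmem.1 (not_lt.mpr hx1.le))]
    rw [s7g_eq1 hx1, s7g2_eq1 hx1, hbV x,
      if_neg (fun h => absurd h.1 (not_le.mpr (by linarith))),
      if_neg (fun h => absurd h.1 (not_le.mpr (by linarith))), zero_mul, sub_zero]
    nlinarith [Real.exp_pos (s7mu lam * (x + s7s ε))]
  · rcases lt_or_gt_of_ne hne2 with hx2 | hx2
    · -- -s < x < -ε
      have hb1 : ¬ x < -s7s ε := not_lt.mpr hx1.le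
      have hmem : x ∈ Set.Ioo (-s7s ε) (s7s ε) := Set.mem_Ioo.mpr ⟨hx1, by linarith⟩
      simp only [Set.indicator_of_mem hmem]
      rw [s7g_eq2 hb1 hx2] at hg0
      rw [s7g_eq2 hb1 hx2, s7g2_eq2 hb1 hx2, hbV x,
        if_neg (fun h => absurd h.1 (not_le.mpr (by linarith))),
        if_neg (fun h => absurd h.1 (not_le.mpr (by linarith))), zero_mul, sub_zero]
      nlinarith [mul_nonneg hl.le hg0]
    · rcases lt_or_gt_of_ne hne3 with hx3 | hx3
      · -- -ε < x < 0
        have hb1 : ¬ x < -s7s ε := not_lt.mpr (by linarith)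
        have hb2 : ¬ x < -ε := not_lt.mpr hx2.le
        have hmem : x ∈ Set.Ioo (-s7s ε) (s7s ε) := Set.mem_Ioo.mpr ⟨by linarith, by linarith⟩
        simp only [Set.indicator_of_mem hmem]
        rw [s7g_eq3 hb1 hb2 hx3] at hg0
        rw [s7g_eq3 hb1 hb2 hx3, s7g1_eq3 hb1 hb2 hx3, s7g2_eq3 hb1 hb2 hx3, hbV x,
          if_neg (fun h => absurd h.2 (not_le.mpr (by linarith))),
          if_pos ⟨hx2.le, hx3⟩]
        have heq : lam * (s7a lam ε - ε * x - ε^2/2 * (Real.exp (-2*x/ε) - 1)) -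
            1/2 * (-2 * Real.exp (-2*x/ε)) -
            1/ε * (-ε + ε * Real.exp (-2*x/ε)) =
            lam * (s7a lam ε - ε * x - ε^2/2 * (Real.exp (-2*x/ε) - 1)) + 1 := by
          field_simp
          ring
        rw [heq]
        nlinarith [mul_nonneg hl.le hg0]
      · rcases lt_or_gt_of_ne hne4 with hx4 | hx4
        · -- 0 < x < ε
          have hb1 : ¬ x < -s7s ε := not_lt.mpr (by linarith)
          have hb2 : ¬ x < -ε := not_lt.mpr (by linarith)
          have hb3 : ¬ x < 0 := not_lt.mpr hx3.le
          have hmem : x ∈ Set.Ioo (-s7s ε) (s7s ε) := Set.mem_Ioo.mpr ⟨by linarith, by linarith⟩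
          simp only [Set.indicator_of_mem hmem]
          rw [s7g_eq4 hb1 hb2 hb3 hx4.le] at hg0
          rw [s7g_eq4 hb1 hb2 hb3 hx4.le, s7g1_eq4 hb1 hb2 hb3 hx4.le,
            s7g2_eq4 hb1 hb2 hb3 hx4.le, hbV x, if_pos ⟨hx3.le, hx4.le⟩]
          have heq : lam * (s7a lam ε + ε * x - ε^2/2 * (Real.exp (2*x/ε) - 1)) -
              1/2 * (-2 * Real.exp (2*x/ε)) -
              (-1/ε) * (ε - ε * Real.exp (2*x/ε)) =
              lam * (s7a lam ε + ε * x - ε^2/2 * (Real.exp (2*x/ε) - 1)) + 1 := by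
            field_simp
            ring
          rw [heq]
          nlinarith [mul_nonneg hl.le hg0]
        · rcases lt_or_gt_of_ne hne5 with hx5 | hx5
          · -- ε < x < s
            have hb1 : ¬ x < -s7s ε := not_lt.mpr (by linarith)
            have hb2 : ¬ x < -ε := not_lt.mpr (by linarith)
            have hb3 : ¬ x < 0 := not_lt.mpr (by linarith)
            have hb4 : ¬ x ≤ ε := not_le.mpr hx4
            have hmem : x ∈ Set.Ioo (-s7s ε) (s7s ε) := Set.mem_Ioo.mpr ⟨by linarith, hx5⟩
            simp only [Set.indicator_of_mem hmem]
            rw [s7g_eq5 hb1 hb2 hb3 hb4 hx5.le] at hg0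
            rw [s7g_eq5 hb1 hb2 hb3 hb4 hx5.le, s7g2_eq5 hb1 hb2 hb3 hb4 hx5.le, hbV x,
              if_neg (fun h => absurd h.2 (not_le.mpr hx4)),
              if_neg (fun h => absurd h.2 (not_lt.mpr (by linarith))), zero_mul, sub_zero]
            nlinarith [mul_nonneg hl.le hg0]
          · -- x > s
            have hb1 : ¬ x < -s7s ε := not_lt.mpr (by linarith)
            have hb2 : ¬ x < -ε := not_lt.mpr (by linarith)
            have hb3 : ¬ x < 0 := not_lt.mpr (by linarith)
            have hb4 : ¬ x ≤ ε := not_le.mpr (by linarith)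
            have hb5 : ¬ x ≤ s7s ε := not_le.mpr hx5
            rw [Set.indicator_of_notMem (fun hmem => absurd hmem.2 (not_lt.mpr hx5.le))]
            rw [s7g_eq6 hb1 hb2 hb3 hb4 hb5, s7g2_eq6 hb1 hb2 hb3 hb4 hb5, hbV x,
              if_neg (fun h => absurd h.2 (not_le.mpr (by linarith))),
              if_neg (fun h => absurd h.2 (not_lt.mpr (by linarith))), zero_mul, sub_zero]
            nlinarith [Real.exp_pos (s7mu lam * (s7s ε - x))]

lemma s7a_le (hl : 0 < lam) (h0 : 0 < ε) (h1 : ε < 1) :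
    s7a lam ε + ε^2 ≤ ((Real.exp 2 + 2)/s7mu lam + 2*Real.exp 2) * s7s ε := by
  have hs : 0 < s7s ε := s7s_pos h0
  have hs1 : s7s ε ≤ 1 := s7s_le_one h1
  have hes : ε < s7s ε := s7eps_lt_s h0 h1
  have hss : s7s ε * s7s ε = ε := Real.mul_self_sqrt h0.le
  have hmu : 0 < s7mu lam := s7mu_pos hl
  have he3 : (3:ℝ) ≤ Real.exp 2 := s7exp2_ge3
  have hεs : ε ≤ s7s ε := hes.le
  have hA : s7A lam ε ≤ (Real.exp 2 + 2) * s7s ε / s7mu lam := by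
    unfold s7A s7k
    apply (div_le_div_iff_of_pos_right hmu).mpr
    nlinarith
  have hrest : s7k * ε * (s7s ε - ε) + (s7s ε - ε)^2 + ε^2/2 * (Real.exp 2 - 1) + ε^2
      ≤ 2 * Real.exp 2 * s7s ε := by
    unfold s7k
    have h2 : (s7s ε - ε)^2 ≤ s7s ε := by nlinarith
    have h3 : ε^2 ≤ s7s ε := by nlinarith
    have h4 : (Real.exp 2 - 1) * ε * (s7s ε - ε) ≤ (Real.exp 2 - 1) * s7s ε := by
      nlinarith
    have h5 : ε^2/2 * (Real.exp 2 - 1) ≤ s7s ε / 2 * (Real.exp 2 - 1) := by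
      nlinarith
    nlinarith
  have hsplit : s7a lam ε + ε^2 = s7A lam ε + (s7k * ε * (s7s ε - ε) + (s7s ε - ε)^2
      + ε^2/2 * (Real.exp 2 - 1)) := by
    unfold s7a s7ge
    ring
  rw [hsplit]
  have hfin : (Real.exp 2 + 2) * s7s ε / s7mu lam + 2 * Real.exp 2 * s7s ε
      = ((Real.exp 2 + 2)/s7mu lam + 2*Real.exp 2) * s7s ε := by ring
  nlinarith [hA, hrest, sq_nonneg ε]

/-- **Resolvent bound for the comparison diffusion.**
For `λ > 0` and the strongly inward-pointing drift `b_V^ε`, every bounded `C¹`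
function `f`, twice differentiable away from `{-√ε, -ε, 0, ε, √ε}` and solving
`λ f - (1/2) f'' - b_V^ε f' = 1_{(-√ε,√ε)}` there, satisfies
`sup |f| ≤ C √ε`, uniformly for small `ε`. -/
theorem stmt_7 (lam : ℝ) (hlam : 0 < lam) :
    ∃ C > 0, ∃ ε₀ ∈ Set.Ioo (0:ℝ) 1, ∀ ε ∈ Set.Ioo (0:ℝ) ε₀,
      ∀ bV f : ℝ → ℝ,
        (∀ x, bV x = if 0 ≤ x ∧ x ≤ ε then -1/ε
                     else if -ε ≤ x ∧ x < 0 then 1/ε else 0) →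
        (∃ M : ℝ, ∀ x, |f x| ≤ M) →
        ContDiff ℝ 1 f →
        (∀ x, x ∉ ({-Real.sqrt ε, -ε, 0, ε, Real.sqrt ε} : Set ℝ) →
          DifferentiableAt ℝ (deriv f) x) →
        (∀ x, x ∉ ({-Real.sqrt ε, -ε, 0, ε, Real.sqrt ε} : Set ℝ) →
          lam * f x - (1/2) * deriv (deriv f) x - bV x * deriv f x
            = Set.indicator (Set.Ioo (-Real.sqrt ε) (Real.sqrt ε)) (fun _ => 1) x) →
        ∀ x, |f x| ≤ C * Real.sqrt ε := by
  have hmu : 0 < s7mu lam := s7mu_pos hlam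
  have he3 : (3:ℝ) ≤ Real.exp 2 := s7exp2_ge3
  refine ⟨(Real.exp 2 + 2)/s7mu lam + 2*Real.exp 2, ?_, 1/2, ⟨by norm_num, by norm_num⟩, ?_⟩
  · have h2 : 0 < (Real.exp 2 + 2)/s7mu lam := div_pos (by positivity) hmu
    nlinarith
  intro ε hε bV f hbV hfb hC1 hf2 hPDE
  obtain ⟨M₀, hM₀⟩ := hfb
  obtain ⟨hε0, hε12⟩ := hε
  have hε1 : ε < 1 := by linarith
  have hsdef : s7s ε = Real.sqrt ε := rfl
  have hcard : ({-Real.sqrt ε, -ε, 0, ε, Real.sqrt ε} : Finset ℝ).card ≤ 5 := by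
    refine le_trans (Finset.card_insert_le _ _) ?_
    apply Nat.succ_le_succ
    refine le_trans (Finset.card_insert_le _ _) ?_
    apply Nat.succ_le_succ
    refine le_trans (Finset.card_insert_le _ _) ?_
    apply Nat.succ_le_succ
    refine le_trans (Finset.card_insert_le _ _) ?_
    apply Nat.succ_le_succ
    simp
  have hcoe : ((({-Real.sqrt ε, -ε, 0, ε, Real.sqrt ε} : Finset ℝ)) : Set ℝ)
      = ({-Real.sqrt ε, -ε, 0, ε, Real.sqrt ε} : Set ℝ) := by
    simp
  have hdf : Differentiable ℝ f := hC1.differentiable one_ne_zero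
  have hgd : ∀ y, HasDerivAt (s7g lam ε) (s7g1 lam ε y) y := s7g_hasDeriv hlam hε0 hε1
  have hgdiff : Differentiable ℝ (s7g lam ε) := fun y => (hgd y).differentiableAt
  have hB : ∀ y, |bV y| ≤ 1/ε := by
    intro y
    rw [hbV y]
    split_ifs
    · rw [show (-1:ℝ)/ε = -(1/ε) by ring, abs_neg, abs_of_pos (by positivity)]
    · rw [abs_of_pos (by positivity)]
    · rw [abs_zero]; positivity
  have hg1d : ∀ y, y ∉ ({-Real.sqrt ε, -ε, 0, ε, Real.sqrt ε} : Set ℝ) →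
      HasDerivAt (s7g1 lam ε) (s7g2 lam ε y) y := by
    intro y hy
    exact s7g1_hasDeriv hlam hε0 hε1 y (by rw [hsdef]; exact hy)
  have hop : ∀ y, y ∉ ({-Real.sqrt ε, -ε, 0, ε, Real.sqrt ε} : Set ℝ) →
      Set.indicator (Set.Ioo (-Real.sqrt ε) (Real.sqrt ε)) (fun _ => (1:ℝ)) y
        ≤ lam * s7g lam ε y - (1/2) * s7g2 lam ε y - bV y * s7g1 lam ε y := by
    intro y hy
    have := s7op hlam hε0 hε1 y (by rw [hsdef]; exact hy) bV hbV
    rwa [hsdef] at this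
  have hind0 : ∀ y, 0 ≤ Set.indicator (Set.Ioo (-Real.sqrt ε) (Real.sqrt ε))
      (fun _ => (1:ℝ)) y :=
    fun y => Set.indicator_nonneg (fun _ _ => by norm_num) y
  -- upper bound : f ≤ g
  have key1 : ∀ y, f y - s7g lam ε y ≤ 0 := by
    have hd1 : Differentiable ℝ (fun y => f y - s7g lam ε y) := hdf.sub hgdiff
    have hder1 : deriv (fun y => f y - s7g lam ε y) = fun y => deriv f y - s7g1 lam ε y :=
      funext fun y => ((hdf y).hasDerivAt.sub (hgd y)).deriv
    apply max_principle lam (1/ε) hlam (by positivity)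
      ({-Real.sqrt ε, -ε, 0, ε, Real.sqrt ε} : Finset ℝ) hcard bV _ hB hd1 ?_ M₀ ?_ ?_
    · intro y hy
      rw [hcoe] at hy
      rw [hder1]
      exact (hf2 y hy).sub (hg1d y hy).differentiableAt
    · intro y
      have h3 := (s7g_bounds hlam hε0 hε1 y).1
      have h4 := hM₀ y
      have h5 := le_abs_self (f y)
      show f y - s7g lam ε y ≤ M₀
      linarith
    · intro y hy
      rw [hcoe] at hy
      have hp := hPDE y hy
      have ho := hop y hy
      have h2d : deriv (deriv (fun y => f y - s7g lam ε y)) y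
          = deriv (deriv f) y - s7g2 lam ε y := by
        rw [hder1]
        exact ((hf2 y hy).hasDerivAt.sub (hg1d y hy)).deriv
      rw [h2d, hder1]
      simp only []
      linarith
  -- lower bound : -f ≤ g
  have key2 : ∀ y, -f y - s7g lam ε y ≤ 0 := by
    have hd1 : Differentiable ℝ (fun y => -f y - s7g lam ε y) := hdf.neg.sub hgdiff
    have hder1 : deriv (fun y => -f y - s7g lam ε y) = fun y => -deriv f y - s7g1 lam ε y :=
      funext fun y => ((hdf y).hasDerivAt.neg.sub (hgd y)).deriv
    apply max_principle lam (1/ε) hlam (by positivity)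
      ({-Real.sqrt ε, -ε, 0, ε, Real.sqrt ε} : Finset ℝ) hcard bV _ hB hd1 ?_ M₀ ?_ ?_
    · intro y hy
      rw [hcoe] at hy
      rw [hder1]
      exact ((hf2 y hy).neg).sub (hg1d y hy).differentiableAt
    · intro y
      have h3 := (s7g_bounds hlam hε0 hε1 y).1
      have h4 := hM₀ y
      have h5 := neg_le_abs (f y)
      show -f y - s7g lam ε y ≤ M₀
      linarith
    · intro y hy
      rw [hcoe] at hy
      have hp := hPDE y hy
      have ho := hop y hy
      have hi := hind0 y
      have h2d : deriv (deriv (fun y => -f y - s7g lam ε y)) y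
          = -deriv (deriv f) y - s7g2 lam ε y := by
        rw [hder1]
        exact ((hf2 y hy).hasDerivAt.neg.sub (hg1d y hy)).deriv
      rw [h2d, hder1]
      simp only []
      linarith
  intro x
  have hb1 := (s7g_bounds hlam hε0 hε1 x).2
  have hb2 := s7a_le hlam hε0 hε1
  rw [hsdef] at hb2
  rw [abs_le]
  constructor
  · have := key2 x; linarith
  · have := key1 x; linarith
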